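/- The derangement polynomial d_n(x) is symmetric with center n/2: writing d_n(x) = \sum_i c_i x^i, we have c_i = c_{n-i} for all 0 \le i \le n. -/

import Mathlib

open Polynomial Finset

/-- The number of excedances of a permutation: positions `i` with `w(i) > i`. -/
def exc {n : ℕ} (w : Equiv.Perm (Fin n)) : ℕ :=
  (Finset.univ.filter fun i : Fin n => (i : ℕ) < (w i : ℕ)).card

/-- The derangement polynomial `d_n(x) = ∑_{w ∈ D_n} x^{exc(w)}`. -/
noncomputable def derangePoly (n : ℕ) : Polynomial ℝ :=
  ∑ w ∈ Finset.univ.filter (fun w : Equiv.Perm (Fin n) => ∀ i, w i ≠ i),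
    Polynomial.X ^ exc w

lemma exc_inv_eq {n : ℕ} (w : Equiv.Perm (Fin n)) :
    exc w⁻¹ = (Finset.univ.filter fun i : Fin n => (w i : ℕ) < (i : ℕ)).card := by
  unfold exc
  apply Finset.card_bij (fun i _ => w⁻¹ i)
  · intro a ha
    simp only [mem_filter, mem_univ, true_and] at ha ⊢
    simpa using ha
  · intro a ha b hb hab
    exact w⁻¹.injective hab
  · intro b hb
    simp only [mem_filter, mem_univ, true_and] at hb
    refine ⟨w b, ?_, by simp⟩
    simp only [mem_filter, mem_univ, true_and]
    simpa using hb

lemma exc_add_exc_inv {n : ℕ} (w : Equiv.Perm (Fin n)) (hw : ∀ i, w i ≠ i) :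
    exc w + exc w⁻¹ = n := by
  rw [exc_inv_eq]
  unfold exc
  have : (Finset.univ.filter fun i : Fin n => (w i : ℕ) < (i : ℕ)) =
      Finset.univ.filter fun i : Fin n => ¬ ((i : ℕ) < (w i : ℕ)) := by
    apply Finset.filter_congr
    intro i _
    have hne : (w i : ℕ) ≠ (i : ℕ) := fun hh => hw i (Fin.ext hh)
    constructor
    · omega
    · intro hh; omega
  rw [this, Finset.card_filter_add_card_filter_not]
  simp

lemma inv_derangement {n : ℕ} (w : Equiv.Perm (Fin n)) (hw : ∀ i, w i ≠ i) :
    ∀ j, w⁻¹ j ≠ j := fun j hj =>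
  hw j ((congrArg w hj).symm.trans (Equiv.apply_symm_apply w j))

lemma coeff_derangePoly (n k : ℕ) :
    (derangePoly n).coeff k =
      ((Finset.univ.filter (fun w : Equiv.Perm (Fin n) =>
        (∀ i, w i ≠ i) ∧ exc w = k)).card : ℝ) := by
  rw [derangePoly, Polynomial.finset_sum_coeff]
  simp only [Polynomial.coeff_X_pow]
  rw [Finset.sum_boole, Finset.filter_filter]
  norm_cast
  congr 1
  apply Finset.filter_congr
  intro x _
  simp [eq_comm]

theorem derangePoly_symmetric (n i : ℕ) (h : i ≤ n) :
    (derangePoly n).coeff i = (derangePoly n).coeff (n - i) := by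
  rw [coeff_derangePoly, coeff_derangePoly]
  norm_cast
  apply Finset.card_bij' (fun w _ => w⁻¹) (fun w _ => w⁻¹)
    (fun w hw => ?_) (fun w hw => ?_) (fun w _ => by simp) (fun w _ => by simp)
  · simp only [mem_filter, mem_univ, true_and] at hw ⊢
    obtain ⟨hd, he⟩ := hw
    refine ⟨inv_derangement w hd, ?_⟩
    have := exc_add_exc_inv w hd
    omega
  · simp only [mem_filter, mem_univ, true_and] at hw ⊢
    obtain ⟨hd, he⟩ := hw
    refine ⟨inv_derangement w hd, ?_⟩
    have := exc_add_exc_inv w hd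
    omega
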